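/- (Proposition 6.16(P2): the trace of the adjoint.) Let T : H →L[K] H be of trace class and let S : H →L[K] H be an adjoint of T, i.e. ⟪x, T y⟫ = ⟪S x, y⟫ for all x, y : H. Then tr S = star (tr T), i.e. ∑' m, (S (e m)) m = star (∑' m, (T (e m)) m). -/

import Mathlib

open Filter

noncomputable section

variable (K : Type*) [NontriviallyNormedField K] [IsUltrametricDist K]
  [CompleteSpace K] [StarRing K] [NormedStarGroup K]

/-- The p-adic coordinate Hilbert space: zero-convergent sequences in `K` with sup norm. -/
abbrev H := ZeroAtInftyContinuousMap ℕ K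

/-- The standard basis vectors of `H K`. -/
def e (n : ℕ) : H K where
  toFun := fun m => if m = n then 1 else 0
  continuous_toFun := continuous_of_discreteTopology
  zero_at_infty' := by
    rw [cocompact_eq_atTop]
    refine Filter.Tendsto.congr' ?_ tendsto_const_nhds
    filter_upwards [Filter.eventually_gt_atTop n] with m hm
    simp [Nat.ne_of_gt hm]

/-- The canonical inner product on `H K`: `⟪x, y⟫ = ∑' i, star (x i) * y i`. -/
def inner' (x y : H K) : K := ∑' i, star (x i) * y i

/-- A bounded operator is of trace class if its matrix entries vanish along the
cofinite filter of `ℕ × ℕ`. -/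
def IsTraceClass (T : H K →L[K] H K) : Prop :=
  Tendsto (fun q : ℕ × ℕ => (T (e K q.2)) q.1) Filter.cofinite (nhds 0)

/-- The trace of the adjoint of a trace class operator is the conjugate of its trace. -/
theorem stmt12 (T S : H K →L[K] H K) (hT : IsTraceClass K T)
    (hadj : ∀ x y : H K, inner' K x (T y) = inner' K (S x) y) :
    ∑' m, (S (e K m)) m = star (∑' m, (T (e K m)) m) := by
  have h1 : ∀ (m : ℕ) (y : H K), inner' K (e K m) y = y m := by
    intro m y
    unfold inner'
    rw [tsum_eq_single m]
    · simp [e]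
    · intro i hi; simp [e, hi]
  have h2 : ∀ (m : ℕ) (x : H K), inner' K x (e K m) = star (x m) := by
    intro m x
    unfold inner'
    rw [tsum_eq_single m]
    · simp [e]
    · intro i hi; simp [e, hi]
  have key : ∀ m : ℕ, (S (e K m)) m = star ((T (e K m)) m) := by
    intro m
    have := hadj (e K m) (e K m)
    rw [h1, h2] at this
    rw [this, star_star]
  rw [tsum_star]
  exact tsum_congr key
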